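/- The number of dispersed Dyck paths of length n equals the central binomial coefficient C(n, ⌊n/2⌋). -/

import Mathlib

inductive DStep | up | down | right
deriving DecidableEq, Repr

instance : Fintype DStep :=
  ⟨{DStep.up, DStep.down, DStep.right}, fun x => by cases x <;> simp⟩

/-- Run a dispersed Dyck path from height `h`; `none` if an illegal step occurs,
otherwise the final height. Down steps require positive height; right steps require height 0. -/
def DStep.run : ℕ → List DStep → Option ℕ
  | h, [] => some h
  | h, .up :: l => DStep.run (h + 1) l
  | h + 1, .down :: l => DStep.run h l
  | 0, .down :: _ => none
  | 0, .right :: l => DStep.run 0 l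
  | _ + 1, .right :: _ => none

/-- A dispersed Dyck path: starts and ends at height 0, all steps legal. -/
def IsDDP (l : List DStep) : Prop := DStep.run 0 l = some 0

instance : DecidablePred IsDDP := fun l => by unfold IsDDP; infer_instance

/-- The finset of all dispersed Dyck paths of length `n`. -/
def DDPs (n : ℕ) : Finset (List.Vector DStep n) :=
  Finset.univ.filter (fun v => IsDDP v.toList)

/-- Number of dispersed Dyck paths of length `n`. -/
def dD (n : ℕ) : ℕ := (DDPs n).card

/-- Total number of up steps over all DDPs of length `n`. -/
def U (n : ℕ) : ℕ := ∑ v ∈ DDPs n, v.toList.count DStep.up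

/-- Total number of down steps over all DDPs of length `n`. -/
def D (n : ℕ) : ℕ := ∑ v ∈ DDPs n, v.toList.count DStep.down

/-- Total number of right steps over all DDPs of length `n`. -/
def R (n : ℕ) : ℕ := ∑ v ∈ DDPs n, v.toList.count DStep.right

/-- `i` is the position of a 1-ascent in `l`: an up step with no adjacent up step. -/
def IsOneAscentAt (l : List DStep) (i : ℕ) : Prop :=
  l[i]? = some .up ∧ l[i + 1]? ≠ some .up ∧ (i = 0 ∨ l[i - 1]? ≠ some .up)

instance (l : List DStep) : DecidablePred (IsOneAscentAt l) := fun i => by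
  unfold IsOneAscentAt; infer_instance

/-- Number of 1-ascents in `l`. -/
def oneAsc (l : List DStep) : ℕ :=
  ((Finset.range l.length).filter (IsOneAscentAt l)).card

/-- Total number of 1-ascents over all DDPs of length `n`. -/
def A (n : ℕ) : ℕ := ∑ v ∈ DDPs n, oneAsc v.toList

/-- Signed final height of a plain path (ignoring any right steps). -/
def psum : List DStep → ℤ
  | [] => 0
  | .up :: l => 1 + psum l
  | .down :: l => -1 + psum l
  | .right :: l => psum l


def g (n h : ℕ) : ℕ :=
  (Finset.univ.filter (fun v : List.Vector DStep n => DStep.run h v.toList = some 0)).card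

def cnt (s : DStep) (n h : ℕ) : ℕ :=
  (Finset.univ.filter (fun v : List.Vector DStep n => DStep.run h (s :: v.toList) = some 0)).card

lemma fiber_card (s : DStep) (n h : ℕ) :
    ((Finset.univ.filter (fun v : List.Vector DStep (n+1) =>
        DStep.run h v.toList = some 0)).filter (fun v => v.head = s)).card = cnt s n h := by
  refine Finset.card_bij' (fun v _ => v.tail) (fun w _ => s ::ᵥ w) ?hi ?hj ?li ?ri
  case hi =>
    intro v hv
    simp only [Finset.mem_filter, Finset.mem_univ, true_and] at hv ⊢
    rw [← List.Vector.toList_cons, ← hv.2, List.Vector.cons_head_tail]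
    exact hv.1
  case hj =>
    intro w hw
    simp only [Finset.mem_filter, Finset.mem_univ, true_and] at hw ⊢
    rw [List.Vector.toList_cons, List.Vector.head_cons]
    exact ⟨hw, rfl⟩
  case li =>
    intro v hv
    simp only [Finset.mem_filter] at hv
    show (s ::ᵥ v.tail) = v
    exact hv.2 ▸ List.Vector.cons_head_tail v
  case ri =>
    intro w _
    exact List.Vector.tail_cons _ _

lemma g_succ (n h : ℕ) : g (n+1) h = cnt .up n h + cnt .down n h + cnt .right n h := by
  unfold g
  rw [Finset.card_eq_sum_card_fiberwise (f := List.Vector.head) (t := Finset.univ)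
    (fun _ _ => Finset.mem_univ _)]
  rw [show (Finset.univ : Finset DStep) = {DStep.up, DStep.down, DStep.right} by decide]
  rw [Finset.sum_insert (by decide), Finset.sum_insert (by decide), Finset.sum_singleton]
  rw [fiber_card, fiber_card, fiber_card]
  omega

lemma cnt_up (n h : ℕ) : cnt .up n h = g n (h+1) := by
  unfold cnt g; congr 1
lemma cnt_down_zero (n : ℕ) : cnt .down n 0 = 0 := by
  unfold cnt
  rw [Finset.filter_false_of_mem, Finset.card_empty]
  intro v _; simp [DStep.run]
lemma cnt_down_succ (n h : ℕ) : cnt .down n (h+1) = g n h := by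
  unfold cnt g; congr 1
lemma cnt_right_zero (n : ℕ) : cnt .right n 0 = g n 0 := by
  unfold cnt g; congr 1
lemma cnt_right_succ (n h : ℕ) : cnt .right n (h+1) = 0 := by
  unfold cnt
  rw [Finset.filter_false_of_mem, Finset.card_empty]
  intro v _; simp [DStep.run]

lemma g_zero' (h : ℕ) : g 0 h = if h = 0 then 1 else 0 := by
  unfold g
  rcases h with _ | h
  · rw [if_pos rfl, Finset.filter_true_of_mem]
    · simp
    · intro v _; rw [v.eq_nil]; rfl
  · rw [if_neg (by omega), Finset.filter_false_of_mem, Finset.card_empty]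
    intro v _; rw [v.eq_nil]; simp [DStep.run]

lemma g_eq (n : ℕ) : ∀ h, g n h = n.choose ((n + h + 1) / 2) := by
  induction n with
  | zero =>
    intro h
    rw [g_zero']
    rcases h with _ | h
    · simp
    · rw [if_neg (by omega), eq_comm]
      exact Nat.choose_eq_zero_of_lt (by omega)
  | succ n ih =>
    intro h
    rcases h with _ | h
    · rw [g_succ, cnt_up, cnt_down_zero, cnt_right_zero, ih, ih]
      rcases Nat.even_or_odd n with ⟨k, hk⟩ | ⟨k, hk⟩
      · subst hk
        rw [show (k+k+0+1+1)/2 = k+1 by omega, show (k+k+0+1)/2 = k by omega,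
          Nat.choose_succ_succ']
        omega
      · subst hk
        have hsymm : (2*k+1).choose k = (2*k+1).choose (k+1) := by
          have := Nat.choose_symm (show k+1 ≤ 2*k+1 by omega)
          rwa [show 2*k+1-(k+1) = k by omega] at this
        rw [show (2*k+1+0+1+1)/2 = k+1 by omega, show (2*k+1+0+1)/2 = k+1 by omega]
        conv_rhs => rw [Nat.choose_succ_succ']
        omega
    · rw [g_succ, cnt_up, cnt_down_succ, cnt_right_succ, ih, ih]
      rw [show (n+1+(h+1)+1)/2 = (n+h+1)/2 + 1 by omega,
        show (n+(h+1+1)+1)/2 = (n+h+1)/2 + 1 by omega,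
        Nat.choose_succ_succ']
      omega

lemma dD_eq_g (n : ℕ) : dD n = g n 0 := rfl

/-- The number of dispersed Dyck paths of length `n` is the central binomial
coefficient `C(n, ⌊n/2⌋)`. -/
theorem dD_eq_centralBinom (n : ℕ) : dD n = n.choose (n / 2) := by
  rw [dD_eq_g, g_eq]
  have := Nat.choose_symm (Nat.div_le_self n 2)
  rwa [show n - n / 2 = (n + 0 + 1) / 2 by omega] at this
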